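/- Let H be a real Hilbert space, A : H → 2^H a maximally monotone operator and B : H → H a β-cocoercive operator for some β > 0 such that zer(A + B) ≠ ∅. Let t₀ > 0, α > 1, ξ ≥ 0, and let λ : [t₀,∞) → (0,∞) and γ : [t₀,∞) → (0, 2β) be differentiable. If x : [t₀,∞) → H is a classic (C²) global solution of (Split-DIN-AVD) and x̄ ∈ zer(A + B), then for every t ≥ t₀: ‖(d/dt)(λ(t) T_{λ(t),γ(t)}(x(t)))‖ ≤ 4‖ẋ(t)‖ + 4β(|γ̇(t)|/γ(t))‖B(x(t))‖ + 2(|γ̇(t)|/γ(t))‖x(t) − x̄‖. -/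

import Mathlib

open scoped InnerProductSpace
open Filter Asymptotics MeasureTheory
open Topology

variable {H : Type*} [NormedAddCommGroup H] [InnerProductSpace ℝ H] [CompleteSpace H]

/-- A set-valued operator `A : H → 2^H` is monotone. -/
def IsMonotoneOp (A : H → Set H) : Prop :=
  ∀ x y u v : H, u ∈ A x → v ∈ A y → 0 ≤ ⟪u - v, x - y⟫_ℝ

/-- A set-valued operator is maximally monotone: it is monotone and its graph is not properly
contained in the graph of another monotone operator. -/
def IsMaximallyMonotone (A : H → Set H) : Prop :=
  IsMonotoneOp A ∧
    ∀ A' : H → Set H, IsMonotoneOp A' → (∀ x, A x ⊆ A' x) → A' = A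

/-- `B` is `β`-cocoercive. -/
def IsCocoercive (β : ℝ) (B : H → H) : Prop :=
  ∀ x y : H, β * ‖B x - B y‖ ^ 2 ≤ ⟪B x - B y, x - y⟫_ℝ

/-- `J γ` is the resolvent `J_{γA}` of `A`, i.e. the single-valued, everywhere defined map
characterized by `y = J_{γA}(x) ↔ (x − y)/γ ∈ A(y)`. -/
def IsResolventFamily (A : H → Set H) (J : ℝ → H → H) : Prop :=
  ∀ γ : ℝ, 0 < γ → ∀ x y : H, J γ x = y ↔ γ⁻¹ • (x - y) ∈ A y

/-- `T_{λ,γ} = (1/λ)[Id − J_{γA}∘(Id − γB)]`. -/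
noncomputable def Tmap (J : ℝ → H → H) (B : H → H) (lam gam : ℝ) (x : H) : H :=
  (1 / lam) • (x - J gam (x - gam • B x))

/-- The Yosida approximation `A_γ = (Id − J_{γA})/γ`. -/
noncomputable def yosida (J : ℝ → H → H) (gam : ℝ) (u : H) : H :=
  (1 / gam) • (u - J gam u)

/-- `zer(A + B) = {x ∈ H : 0 ∈ Ax + Bx}`. -/
def zerSum (A : H → Set H) (B : H → H) : Set H := {x | ∃ a ∈ A x, a + B x = 0}

lemma resolvent_nonexp {A : H → Set H} (hA : IsMonotoneOp A)
    {J : ℝ → H → H} (hJ : IsResolventFamily A J) {γ : ℝ} (hγ : 0 < γ) (a b : H) :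
    ‖J γ a - J γ b‖ ≤ ‖a - b‖ := by
  have hpa := (hJ γ hγ a (J γ a)).mp rfl
  have hpb := (hJ γ hγ b (J γ b)).mp rfl
  set p := J γ a with hp
  set q := J γ b with hq
  have h0 := hA p q _ _ hpa hpb
  rw [← smul_sub, real_inner_smul_left] at h0
  have h1 : 0 ≤ ⟪(a - p) - (b - q), p - q⟫_ℝ := by
    have hγi : 0 < γ⁻¹ := inv_pos.mpr hγ
    nlinarith [h0]
  rw [sub_sub_sub_comm, inner_sub_left, real_inner_self_eq_norm_sq] at h1
  have h2 : ‖p - q‖ ^ 2 ≤ ‖a - b‖ * ‖p - q‖ := by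
    have := real_inner_le_norm (a - b) (p - q)
    nlinarith
  rcases eq_or_lt_of_le (norm_nonneg (p - q)) with h | h
  · rw [← h]; exact norm_nonneg _
  · have := le_of_mul_le_mul_right (by nlinarith : ‖p - q‖ * ‖p - q‖ ≤ ‖a - b‖ * ‖p - q‖) h
    exact this

lemma resolvent_identity {A : H → Set H}
    {J : ℝ → H → H} (hJ : IsResolventFamily A J) {γ δ : ℝ} (hγ : 0 < γ) (hδ : 0 < δ)
    (u : H) :
    J δ ((δ / γ) • u + (1 - δ / γ) • J γ u) = J γ u := by
  have hy := (hJ γ hγ u (J γ u)).mp rfl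
  apply (hJ δ hδ _ (J γ u)).mpr
  have hw : (δ / γ) • u + (1 - δ / γ) • J γ u - J γ u = (δ / γ) • (u - J γ u) := by
    rw [smul_sub, sub_smul, one_smul]; abel
  rw [hw, smul_smul]
  have : δ⁻¹ * (δ / γ) = γ⁻¹ := by field_simp
  rw [this]
  exact hy

lemma cocoercive_lip {β : ℝ} (hβ : 0 < β) {B : H → H} (hB : IsCocoercive β B) (a b : H) :
    ‖B a - B b‖ ≤ β⁻¹ * ‖a - b‖ := by
  have h1 := hB a b
  have h2 := real_inner_le_norm (B a - B b) (a - b)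
  rcases eq_or_lt_of_le (norm_nonneg (B a - B b)) with h | h
  · rw [← h]; positivity
  · have : β * ‖B a - B b‖ ≤ ‖a - b‖ := by
      have := le_of_mul_le_mul_right
        (by nlinarith : (β * ‖B a - B b‖) * ‖B a - B b‖ ≤ ‖a - b‖ * ‖B a - B b‖) h
      exact this
    have h3 := mul_le_mul_of_nonneg_left this (inv_pos.mpr hβ).le
    rwa [← mul_assoc, inv_mul_cancel₀ hβ.ne', one_mul] at h3

lemma forward_nonexp {β : ℝ} (hβ : 0 < β) {B : H → H} (hB : IsCocoercive β B)
    {γ : ℝ} (hγ0 : 0 ≤ γ) (hγ2 : γ ≤ 2 * β) (a b : H) :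
    ‖(a - b) - γ • (B a - B b)‖ ≤ ‖a - b‖ := by
  have hsq : ‖(a - b) - γ • (B a - B b)‖ ^ 2 ≤ ‖a - b‖ ^ 2 := by
    rw [norm_sub_sq_real, real_inner_smul_right, norm_smul, Real.norm_eq_abs,
      abs_of_nonneg hγ0, mul_pow]
    have h1 := hB a b
    have h2 : ⟪a - b, B a - B b⟫_ℝ = ⟪B a - B b, a - b⟫_ℝ := real_inner_comm _ _
    nlinarith [sq_nonneg ‖B a - B b‖, mul_nonneg hγ0 (sq_nonneg ‖B a - B b‖)]
  exact (pow_le_pow_iff_left₀ (norm_nonneg _) (norm_nonneg _) two_ne_zero).mp hsq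

lemma resolvent_fixed {A : H → Set H}
    {J : ℝ → H → H} (hJ : IsResolventFamily A J) {B : H → H} {γ : ℝ} (hγ : 0 < γ)
    {xbar : H} (hxbar : ∃ a ∈ A xbar, a + B xbar = 0) :
    J γ (xbar - γ • B xbar) = xbar := by
  obtain ⟨a, ha, hab⟩ := hxbar
  apply (hJ γ hγ _ xbar).mpr
  have : xbar - γ • B xbar - xbar = γ • (-B xbar) := by
    rw [smul_neg]; abel
  rw [this, smul_smul, inv_mul_cancel₀ hγ.ne', one_smul]
  exact (eq_neg_of_add_eq_zero_left hab) ▸ ha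

lemma key_est {A : H → Set H} (hA : IsMonotoneOp A)
    {J : ℝ → H → H} (hJ : IsResolventFamily A J)
    {β : ℝ} (hβ : 0 < β) {B : H → H} (hB : IsCocoercive β B)
    {xbar : H} (hxbar : ∃ a ∈ A xbar, a + B xbar = 0)
    {γs γt : ℝ} (hγs : γs ∈ Set.Ioo 0 (2 * β)) (hγt : γt ∈ Set.Ioo 0 (2 * β))
    (p q : H) :
    ‖(p - J γs (p - γs • B p)) - (q - J γt (q - γt • B q))‖ ≤
      2 * ‖p - q‖ + |γs - γt| * (2 * ‖B p‖ + 2 / γs * ‖p - xbar‖) := by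
  obtain ⟨hγs0, hγs2⟩ := hγs
  obtain ⟨hγt0, hγt2⟩ := hγt
  set us := p - γs • B p with hus
  set ut := q - γt • B q with hut
  set ps := J γs us with hps
  set pt := J γt ut with hpt
  set c := γt / γs with hc
  have hri : J γt (c • us + (1 - c) • ps) = ps := resolvent_identity hJ hγs0 hγt0 us
  have h1 : ‖ps - pt‖ ≤ ‖(us - ut) + (c - 1) • (us - ps)‖ := by
    have heq2 : (c • us + (1 - c) • ps) - ut = (us - ut) + (c - 1) • (us - ps) := by
      module
    calc ‖ps - pt‖ = ‖J γt (c • us + (1 - c) • ps) - J γt ut‖ := by rw [hri]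
      _ ≤ ‖(c • us + (1 - c) • ps) - ut‖ := resolvent_nonexp hA hJ hγt0 _ _
      _ = _ := by rw [heq2]
  have h2 : ‖us - ut‖ ≤ ‖p - q‖ + |γs - γt| * ‖B p‖ := by
    have heq3 : us - ut = ((p - q) - γt • (B p - B q)) - (γs - γt) • B p := by
      module
    calc ‖us - ut‖ ≤ ‖(p - q) - γt • (B p - B q)‖ + ‖(γs - γt) • B p‖ := by
          rw [heq3]; exact norm_sub_le _ _
      _ ≤ ‖p - q‖ + |γs - γt| * ‖B p‖ := by
          gcongr
          · exact forward_nonexp hβ hB hγt0.le hγt2.le p q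
          · rw [norm_smul, Real.norm_eq_abs]
  have h3 : ‖us - ps‖ ≤ 2 * ‖p - xbar‖ + γs * ‖B p‖ := by
    have hfix : J γs (xbar - γs • B xbar) = xbar := resolvent_fixed hJ hγs0 hxbar
    have ha : ‖xbar - ps‖ ≤ ‖p - xbar‖ := by
      calc ‖xbar - ps‖ = ‖J γs (xbar - γs • B xbar) - J γs us‖ := by rw [hfix]
        _ ≤ ‖(xbar - γs • B xbar) - us‖ := resolvent_nonexp hA hJ hγs0 _ _
        _ = ‖(xbar - p) - γs • (B xbar - B p)‖ := by
            rw [hus, show xbar - γs • B xbar - (p - γs • B p) =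
              (xbar - p) - γs • (B xbar - B p) by module]
        _ ≤ ‖xbar - p‖ := forward_nonexp hβ hB hγs0.le hγs2.le xbar p
        _ = ‖p - xbar‖ := norm_sub_rev _ _
    have hb : ‖us - xbar‖ ≤ ‖p - xbar‖ + γs * ‖B p‖ := by
      calc ‖us - xbar‖ = ‖(p - xbar) - γs • B p‖ := by rw [hus, sub_right_comm]
        _ ≤ ‖p - xbar‖ + ‖γs • B p‖ := norm_sub_le _ _
        _ = ‖p - xbar‖ + γs * ‖B p‖ := by
            rw [norm_smul, Real.norm_eq_abs, abs_of_pos hγs0]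
    calc ‖us - ps‖ ≤ ‖us - xbar‖ + ‖xbar - ps‖ := by
          rw [show us - ps = (us - xbar) + (xbar - ps) by abel]; exact norm_add_le _ _
      _ ≤ 2 * ‖p - xbar‖ + γs * ‖B p‖ := by linarith
  have hcabs : |c - 1| = |γs - γt| / γs := by
    rw [hc, abs_sub_comm γs γt, show γt / γs - 1 = (γt - γs) / γs by field_simp,
      abs_div, abs_of_pos hγs0]
  calc ‖(p - ps) - (q - pt)‖ ≤ ‖p - q‖ + ‖ps - pt‖ := by
        rw [show (p - ps) - (q - pt) = (p - q) - (ps - pt) by abel]; exact norm_sub_le _ _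
    _ ≤ ‖p - q‖ + (‖us - ut‖ + |c - 1| * ‖us - ps‖) := by
        have := norm_add_le (us - ut) ((c - 1) • (us - ps))
        rw [norm_smul, Real.norm_eq_abs] at this
        linarith
    _ ≤ ‖p - q‖ + ((‖p - q‖ + |γs - γt| * ‖B p‖)
          + |γs - γt| / γs * (2 * ‖p - xbar‖ + γs * ‖B p‖)) := by
        rw [hcabs]; gcongr
    _ = 2 * ‖p - q‖ + |γs - γt| * (2 * ‖B p‖ + 2 / γs * ‖p - xbar‖) := by
        have hne : γs ≠ 0 := hγs0.ne'
        generalize |γs - γt| = D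
        field_simp
        ring

/-- along a classic (C²) global solution of (Split-DIN-AVD), the derivative of
`t ↦ λ(t) T_{λ(t),γ(t)}(x(t))` satisfies the stated bound for every `t ≥ t₀`. -/
theorem deriv_lamT_estimate
    (A : H → Set H) (B : H → H) (β : ℝ) (hβ : 0 < β)
    (hA : IsMaximallyMonotone A) (hB : IsCocoercive β B)
    (J : ℝ → H → H) (hJ : IsResolventFamily A J)
    (hzer : (zerSum A B).Nonempty)
    (t₀ α ξ : ℝ) (ht₀ : 0 < t₀) (hα : 1 < α) (hξ : 0 ≤ ξ)
    (lam gam lam' gam' : ℝ → ℝ)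
    (hlamd : ∀ t ≥ t₀, HasDerivAt lam (lam' t) t)
    (hgamd : ∀ t ≥ t₀, HasDerivAt gam (gam' t) t)
    (hlampos : ∀ t ≥ t₀, 0 < lam t)
    (hgamrange : ∀ t ≥ t₀, gam t ∈ Set.Ioo 0 (2 * β))
    (x x' x'' T' S' : ℝ → H)
    (hx : ∀ t ≥ t₀, HasDerivAt x (x' t) t)
    (hx' : ∀ t ≥ t₀, HasDerivAt x' (x'' t) t)
    (hx''c : ContinuousOn x'' (Set.Ici t₀))
    (hT : ∀ t ≥ t₀, HasDerivAt (fun s => Tmap J B (lam s) (gam s) (x s)) (T' t) t)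
    (heq : ∀ t ≥ t₀,
      x'' t + (α / t) • x' t + ξ • T' t + Tmap J B (lam t) (gam t) (x t) = 0)
    (hS : ∀ t ≥ t₀,
      HasDerivAt (fun s => lam s • Tmap J B (lam s) (gam s) (x s)) (S' t) t)
    (xbar : H) (hxbar : xbar ∈ zerSum A B) :
    ∀ t ≥ t₀, ‖S' t‖ ≤ 4 * ‖x' t‖ + 4 * β * (|gam' t| / gam t) * ‖B (x t)‖
      + 2 * (|gam' t| / gam t) * ‖x t - xbar‖ := by
  intro t ht
  obtain ⟨hγt0, hγt2⟩ := hgamrange t ht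
  set g : ℝ → H := fun s => x s - J (gam s) (x s - gam s • B (x s)) with hg
  have hGg : ∀ s ≥ t₀, lam s • Tmap J B (lam s) (gam s) (x s) = g s := by
    intro s hs
    simp only [Tmap, hg, smul_smul]
    rw [mul_one_div, div_self (hlampos s hs).ne', one_smul]
  set l := 𝓝[>] t with hl
  haveI : l.NeBot := by rw [hl]; infer_instance
  have hmono : l ≤ 𝓝[≠] t := nhdsWithin_mono t (fun s hs => ne_of_gt hs)
  have hslopeG : Tendsto
      (fun s => ‖slope (fun r => lam r • Tmap J B (lam r) (gam r) (x r)) t s‖) l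
      (𝓝 ‖S' t‖) :=
    ((hasDerivAt_iff_tendsto_slope.mp (hS t ht)).mono_left hmono).norm
  set C : ℝ → ℝ := fun s => 2 * ‖B (x s)‖ + 2 / gam s * ‖x s - xbar‖ with hC
  have hxc : Tendsto x l (𝓝 (x t)) :=
    ((hx t ht).continuousAt.tendsto).mono_left nhdsWithin_le_nhds
  have hBlip : LipschitzWith (β⁻¹).toNNReal B := by
    apply LipschitzWith.of_dist_le_mul
    intro a b
    rw [dist_eq_norm, dist_eq_norm]
    have := cocoercive_lip hβ hB a b
    rwa [Real.coe_toNNReal _ (inv_nonneg.mpr hβ.le)]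
  have hBc : Tendsto (fun s => B (x s)) l (𝓝 (B (x t))) :=
    (hBlip.continuous.tendsto _).comp hxc
  have hgamc : Tendsto gam l (𝓝 (gam t)) :=
    ((hgamd t ht).continuousAt.tendsto).mono_left nhdsWithin_le_nhds
  have hCc : Tendsto C l (𝓝 (C t)) := by
    apply Tendsto.add
    · exact (hBc.norm).const_mul 2
    · exact (tendsto_const_nhds.div hgamc hγt0.ne').mul (hxc.sub tendsto_const_nhds).norm
  have hslx : Tendsto (fun s => ‖slope x t s‖) l (𝓝 ‖x' t‖) :=
    ((hasDerivAt_iff_tendsto_slope.mp (hx t ht)).mono_left hmono).norm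
  have hslγ : Tendsto (fun s => |slope gam t s|) l (𝓝 |gam' t|) :=
    ((hasDerivAt_iff_tendsto_slope.mp (hgamd t ht)).mono_left hmono).abs
  have hRHS : Tendsto (fun s => 2 * ‖slope x t s‖ + |slope gam t s| * C s) l
      (𝓝 (2 * ‖x' t‖ + |gam' t| * C t)) := (hslx.const_mul 2).add (hslγ.mul hCc)
  have hev : ∀ᶠ s in l,
      ‖slope (fun r => lam r • Tmap J B (lam r) (gam r) (x r)) t s‖ ≤
        2 * ‖slope x t s‖ + |slope gam t s| * C s := by
    filter_upwards [self_mem_nhdsWithin] with s hs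
    have hst : t < s := hs
    have hs0 : t₀ ≤ s := le_trans ht hst.le
    have hkey := key_est hA.1 hJ hβ hB hxbar (hgamrange s hs0) ⟨hγt0, hγt2⟩ (x s) (x t)
    have hinv : (0:ℝ) < (s - t)⁻¹ := inv_pos.mpr (by linarith)
    have e1 : slope (fun r => lam r • Tmap J B (lam r) (gam r) (x r)) t s
        = (s - t)⁻¹ • (g s - g t) := by
      rw [slope_def_module, hGg s hs0, hGg t ht]
    have e2 : ‖slope x t s‖ = (s - t)⁻¹ * ‖x s - x t‖ := by
      rw [slope_def_module, norm_smul, Real.norm_eq_abs, abs_of_pos hinv]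
    have e3 : |slope gam t s| = (s - t)⁻¹ * |gam s - gam t| := by
      rw [slope_def_module, smul_eq_mul, abs_mul, abs_of_pos hinv]
    rw [e1, e2, e3, norm_smul, Real.norm_eq_abs, abs_of_pos hinv]
    have hC0 : 0 ≤ C s := by
      have : 0 < gam s := (hgamrange s hs0).1
      positivity
    calc (s - t)⁻¹ * ‖g s - g t‖
        ≤ (s - t)⁻¹ * (2 * ‖x s - x t‖ + |gam s - gam t| * C s) := by
          apply mul_le_mul_of_nonneg_left _ hinv.le
          exact hkey
      _ = 2 * ((s - t)⁻¹ * ‖x s - x t‖) + (s - t)⁻¹ * |gam s - gam t| * C s := by ring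
  have hfinal := le_of_tendsto_of_tendsto hslopeG hRHS hev
  -- arithmetic wrap-up
  have hb : (0:ℝ) ≤ ‖B (x t)‖ := norm_nonneg _
  have hd : (0:ℝ) ≤ ‖x t - xbar‖ := norm_nonneg _
  have hk : (0:ℝ) ≤ |gam' t| / gam t := div_nonneg (abs_nonneg _) hγt0.le
  have ha_eq : |gam' t| = (|gam' t| / gam t) * gam t := (div_mul_cancel₀ _ hγt0.ne').symm
  have hx4 : ‖x' t‖ ≥ 0 := norm_nonneg _
  have hCt : C t = 2 * ‖B (x t)‖ + 2 / gam t * ‖x t - xbar‖ := rfl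
  rw [hCt] at hfinal
  set k := |gam' t| / gam t with hkdef
  have h1 : |gam' t| * (2 / gam t * ‖x t - xbar‖) = 2 * k * ‖x t - xbar‖ := by
    rw [hkdef]; field_simp
  have h2 : |gam' t| * (2 * ‖B (x t)‖) = 2 * (k * gam t) * ‖B (x t)‖ := by
    rw [ha_eq]; ring
  nlinarith [mul_nonneg (mul_nonneg hk hb) (by linarith : (0:ℝ) ≤ 2 * β - gam t)]
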